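/- Let f : ℝ → ℝ be twice continuously differentiable, with f and f'' square integrable, and suppose f is even (f(-x) = f(x) for all x) and satisfies -f''(x) + f(x) - 3 sech²(x/2) f(x) = 0 for all x ∈ ℝ. Then f is identically zero. (The kernel of the Schrödinger operator -∂ₓ² + 1 - 3 sech²(x/2) on H²(ℝ) is spanned by the odd function (sech²(x/2))', so it contains no nontrivial even function.) -/

import Mathlib

open MeasureTheory Filter Topology Set

open MeasureTheory Filter Topology


noncomputable section SchroedingerAux

/-- explicit odd kernel element -/
def gker (x : ℝ) : ℝ := Real.sinh (x/2) / Real.cosh (x/2) ^ 3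

/-- its derivative -/
def gker' (x : ℝ) : ℝ := (3 - 2 * Real.cosh (x/2) ^ 2) / (2 * Real.cosh (x/2) ^ 4)

lemma cosh_half_pos (x : ℝ) : 0 < Real.cosh (x/2) := Real.cosh_pos _

lemma hasDerivAt_cosh_half (x : ℝ) :
    HasDerivAt (fun y => Real.cosh (y/2)) (Real.sinh (x/2) / 2) x := by
  have h : HasDerivAt (fun y => Real.cosh (y/2)) _ x := (Real.hasDerivAt_cosh (x/2)).comp (h := fun y => y / 2) x ((hasDerivAt_id x).div_const 2)
  convert h using 1; ring

lemma hasDerivAt_sinh_half (x : ℝ) :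
    HasDerivAt (fun y => Real.sinh (y/2)) (Real.cosh (x/2) / 2) x := by
  have h : HasDerivAt (fun y => Real.sinh (y/2)) _ x := (Real.hasDerivAt_sinh (x/2)).comp (h := fun y => y / 2) x ((hasDerivAt_id x).div_const 2)
  convert h using 1; ring

lemma hasDerivAt_gker (x : ℝ) : HasDerivAt gker (gker' x) x := by
  have hc := cosh_half_pos x
  have h : HasDerivAt gker _ x := (hasDerivAt_sinh_half x).div ((hasDerivAt_cosh_half x).pow 3)
    (pow_ne_zero _ hc.ne')
  convert h using 1
  norm_num
  have hsq : Real.cosh (x/2) ^ 2 = 1 + Real.sinh (x/2) ^ 2 := Real.cosh_sq' _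
  have hs2 : Real.sinh (x/2) ^ 2 = Real.cosh (x/2) ^ 2 - 1 := by linarith
  unfold gker'
  field_simp
  linear_combination 3 * hs2

lemma hasDerivAt_gker' (x : ℝ) :
    HasDerivAt gker' ((1 - 3 * (Real.cosh (x/2))⁻¹ ^ 2) * gker x) x := by
  have hc := cosh_half_pos x
  have h : HasDerivAt gker' _ x := ((((hasDerivAt_cosh_half x).pow 2).const_mul (2:ℝ)).neg.const_add 3).div
    (((hasDerivAt_cosh_half x).pow 4).const_mul (2:ℝ)) (mul_ne_zero two_ne_zero (pow_ne_zero _ hc.ne'))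
  convert h using 1
  norm_num
  unfold gker
  field_simp
  ring

lemma one_le_cosh_half (x : ℝ) : 1 ≤ Real.cosh (x/2) := Real.one_le_cosh _

lemma abs_sinh_le_cosh (u : ℝ) : |Real.sinh u| ≤ Real.cosh u := by
  have h := Real.cosh_sq' u
  have := Real.cosh_pos u
  nlinarith [sq_abs (Real.sinh u), abs_nonneg (Real.sinh u)]

lemma gker_bound (x : ℝ) : |gker x| ≤ 1 := by
  have hc := cosh_half_pos x
  have h1 := one_le_cosh_half x
  have h2 := abs_sinh_le_cosh (x/2)
  rw [gker, abs_div, abs_pow, abs_of_pos hc, div_le_one (by positivity)]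
  have hc2 : 1 ≤ Real.cosh (x/2) ^ 2 := by nlinarith
  have h3 : Real.cosh (x/2) ≤ Real.cosh (x/2) ^ 3 := by
    nlinarith [mul_nonneg hc.le (sub_nonneg.mpr hc2)]
  linarith

lemma gker'_bound (x : ℝ) : |gker' x| ≤ 3 := by
  have hc := cosh_half_pos x
  have h1 := one_le_cosh_half x
  have hc2 : 1 ≤ Real.cosh (x/2) ^ 2 := by nlinarith
  have hc24 : Real.cosh (x/2) ^ 2 ≤ Real.cosh (x/2) ^ 4 := by nlinarith
  rw [gker', abs_div, abs_of_pos (show (0:ℝ) < 2 * Real.cosh (x/2) ^ 4 by positivity),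
    div_le_iff₀ (by positivity), abs_le]
  constructor <;> linarith

lemma gker_zero : gker 0 = 0 := by simp [gker]

lemma gker'_zero : gker' 0 = 1/2 := by norm_num [gker']

lemma coeff_bound (x : ℝ) : |1 - 3 * (Real.cosh (x/2))⁻¹ ^ 2| ≤ 2 := by
  have hc := cosh_half_pos x
  have h1 := one_le_cosh_half x
  have hv : (Real.cosh (x/2))⁻¹ ≤ 1 := inv_le_one_of_one_le₀ h1
  have hv0 : 0 < (Real.cosh (x/2))⁻¹ := by positivity
  rw [abs_le]
  constructor <;> nlinarith

/-- choose a point where `h^2` is below its average on an interval of length 1 -/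
lemma exists_point_sq_le (h : ℝ → ℝ) (hcont : Continuous h) (a : ℝ) :
    ∃ c ∈ Icc a (a+1), h c ^ 2 ≤ ∫ x in a..(a+1), h x ^ 2 := by
  obtain ⟨c, hc, hmin⟩ := isCompact_Icc.exists_isMinOn ⟨a, by constructor <;> linarith⟩
    ((hcont.pow 2).continuousOn (s := Icc a (a+1)))
  refine ⟨c, hc, ?_⟩
  calc h c ^ 2 = ∫ _ in a..(a+1), h c ^ 2 := by simp
    _ ≤ ∫ x in a..(a+1), h x ^ 2 := by
        apply intervalIntegral.integral_mono_on (by linarith) (by simp)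
          ((hcont.pow 2).intervalIntegrable _ _)
        intro x hx; exact hmin hx

/-- somewhere the tail integral over a length-3 window is small -/
lemma exists_small_window (h : ℝ → ℝ) (hcont : Continuous h)
    (hint : Integrable (fun x => h x ^ 2) (volume : Measure ℝ)) {ε : ℝ} (hε : 0 < ε) :
    ∃ t : ℝ, ∫ x in t..(t+3), h x ^ 2 ≤ ε := by
  by_contra hcon
  push_neg at hcon
  have key : ∀ n : ℕ, (n : ℝ) * ε ≤ ∫ x in (0:ℝ)..(3*n), h x ^ 2 := by
    intro n
    induction n with
    | zero => simp
    | succ n ih =>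
      have hadd : (∫ x in (0:ℝ)..(3*n), h x ^ 2) + ∫ x in (3*n:ℝ)..(3*n+3), h x ^ 2
          = ∫ x in (0:ℝ)..(3*(n+1):ℝ), h x ^ 2 := by
        have := intervalIntegral.integral_add_adjacent_intervals
          (f := fun x => h x ^ 2) (a := (0:ℝ)) (b := (3*n:ℝ)) (c := (3*(n+1):ℝ))
          ((hcont.pow 2).intervalIntegrable (μ := volume) _ _) ((hcont.pow 2).intervalIntegrable (μ := volume) _ _)
        rw [← this]
        norm_num [mul_add]
      push_cast
      rw [← hadd]
      have := (hcon (3*n)).le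
      nlinarith
  obtain ⟨n, hn⟩ := exists_nat_gt ((∫ x, h x ^ 2) / ε)
  have hle : ∫ x in (0:ℝ)..(3*n), h x ^ 2 ≤ ∫ x, h x ^ 2 := by
    rw [intervalIntegral.integral_of_le (by positivity)]
    exact setIntegral_le_integral (μ := volume) hint (ae_of_all _ (fun x => by positivity))
  have := key n
  rw [div_lt_iff₀ hε] at hn
  linarith

set_option maxHeartbeats 1600000 in
/-- The Schrödinger operator `-∂ₓ² + 1 - 3 sech²(x/2)` has no nontrivial even
function in its kernel: any even `f ∈ H²(ℝ)` with
`-f'' + f - 3 sech²(x/2) f = 0` vanishes identically. -/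
theorem schroedinger_kernel_no_even (f : ℝ → ℝ)
    (hC2 : ContDiff ℝ 2 f)
    (hfL2 : MemLp f 2 (volume : Measure ℝ))
    (hf''L2 : MemLp (deriv (deriv f)) 2 (volume : Measure ℝ))
    (heven : ∀ x : ℝ, f (-x) = f x)
    (hode : ∀ x : ℝ,
      -deriv (deriv f) x + f x - 3 * ((Real.cosh (x / 2))⁻¹) ^ 2 * f x = 0) :
    f = 0 := by
  -- basic regularity
  have hfd : Differentiable ℝ f := hC2.differentiable (by norm_num)
  have hfc : Continuous f := hfd.continuous
  have h21 : ContDiff ℝ 1 (deriv f) :=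
    ((contDiff_succ_iff_deriv (n := 1)).mp (by exact_mod_cast hC2)).2.2
  have hfd1 : Differentiable ℝ (deriv f) := h21.differentiable one_ne_zero
  have hf'c : Continuous (deriv f) := hfd1.continuous
  -- the ODE in explicit form
  have hf'' : ∀ x, deriv (deriv f) x = (1 - 3 * (Real.cosh (x/2))⁻¹ ^ 2) * f x := by
    intro x
    have := hode x
    ring_nf at this ⊢
    linarith
  have hf''c : Continuous (deriv (deriv f)) := by
    have h : deriv (deriv f) = fun x => (1 - 3 * (Real.cosh (x/2))⁻¹ ^ 2) * f x :=
      funext hf''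
    rw [h]
    fun_prop (disch := intros; exact (cosh_half_pos _).ne')
  have hf''b : ∀ x, |deriv (deriv f) x| ≤ 2 * |f x| := by
    intro x
    rw [hf'', abs_mul]
    exact mul_le_mul_of_nonneg_right (coeff_bound x) (abs_nonneg _)
  -- the Wronskian
  set W : ℝ → ℝ := fun x => f x * gker' x - deriv f x * gker x with hWdef
  have hWd : ∀ x, HasDerivAt W 0 x := by
    intro x
    have h1 : HasDerivAt f (deriv f x) x := (hfd x).hasDerivAt
    have h2 : HasDerivAt (deriv f) ((1 - 3 * (Real.cosh (x/2))⁻¹ ^ 2) * f x) x := by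
      rw [← hf'' x]; exact (hfd1 x).hasDerivAt
    have h : HasDerivAt W _ x := (h1.mul (hasDerivAt_gker' x)).sub (h2.mul (hasDerivAt_gker x))
    convert h using 1
    ring
  have hWconst : ∀ x, W x = W 0 := fun x =>
    is_const_of_deriv_eq_zero (fun y => (hWd y).differentiableAt)
      (fun y => (hWd y).deriv) x 0
  -- W 0 = 0 via decay along good windows
  have key : ∀ ε : ℝ, 0 < ε → |W 0| ≤ 60 * Real.sqrt ε := by
    intro ε hε
    set r := Real.sqrt ε with hrdef
    have hr : 0 < r := Real.sqrt_pos.mpr hε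
    have hr2 : r ^ 2 = ε := Real.sq_sqrt hε.le
    obtain ⟨t, ht⟩ := exists_small_window f hfc hfL2.integrable_sq hε
    have int_f2 : ∀ u v : ℝ, IntervalIntegrable (fun x => f x ^ 2) volume u v :=
      fun u v => ((hfc.pow 2).intervalIntegrable (μ := volume) u v)
    have hsub : ∀ u v : ℝ, t ≤ u → u ≤ v → v ≤ t + 3 →
        (∫ x in u..v, f x ^ 2) ≤ ε := by
      intro u v h1 h2 h3
      calc (∫ x in u..v, f x ^ 2) ≤ ∫ x in t..(t+3), f x ^ 2 :=
            intervalIntegral.integral_mono_interval h1 h2 h3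
              (ae_of_all _ fun x => by positivity) (int_f2 t (t+3))
        _ ≤ ε := ht
    obtain ⟨a, ha, hfa⟩ := exists_point_sq_le f hfc t
    obtain ⟨b, hb, hfb⟩ := exists_point_sq_le f hfc (t+2)
    have hfa' : |f a| ≤ r := by
      have := le_trans hfa (hsub t (t+1) le_rfl (by linarith) (by linarith))
      nlinarith [sq_abs (f a), abs_nonneg (f a)]
    have hfb' : |f b| ≤ r := by
      have h1 := le_trans hfb (hsub (t+2) (t+2+1) (by linarith) (by linarith) (by linarith))
      nlinarith [sq_abs (f b), abs_nonneg (f b)]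
    have hab : a < b := by
      have := ha.2; have := hb.1; linarith
    -- mean value theorem: a point ξ with |f' ξ| ≤ 2 r
    obtain ⟨ξ, hξ, hslope⟩ := exists_hasDerivAt_eq_slope f (deriv f) hab
      hfc.continuousOn (fun x _ => (hfd x).hasDerivAt)
    have hba : 1 ≤ b - a := by have := ha.2; have := hb.1; linarith
    have hfξ' : |deriv f ξ| ≤ 2 * r := by
      rw [hslope, abs_div, abs_of_pos (by linarith : (0:ℝ) < b - a),
        div_le_iff₀ (by linarith)]
      calc |f b - f a| ≤ |f b| + |f a| := abs_sub _ _
        _ ≤ 2 * r := by linarith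
        _ ≤ 2 * r * (b - a) := by nlinarith
    -- integral of |f| over subwindows is at most 2r
    have habs : ∀ u v : ℝ, t ≤ u → u ≤ v → v ≤ t + 3 →
        (∫ x in u..v, |f x|) ≤ 2 * r := by
      intro u v h1 h2 h3
      have hmono : (∫ x in u..v, |f x|) ≤ ∫ x in u..v, (f x ^ 2 / (2*r) + r/2) := by
        apply intervalIntegral.integral_mono_on h2
          ((hfc.abs).intervalIntegrable (μ := volume) u v)
          ((((hfc.pow 2).div_const _).add continuous_const).intervalIntegrable (μ := volume) u v)
        intro x _
        show |f x| ≤ f x ^ 2 / (2*r) + r/2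
        rw [div_add' _ _ _ (by positivity : (2*r:ℝ) ≠ 0), le_div_iff₀ (by positivity)]
        nlinarith [sq_abs (f x), sq_nonneg (|f x| - r)]
      have hval : (∫ x in u..v, (f x ^ 2 / (2*r) + r/2))
          = (∫ x in u..v, f x ^ 2) / (2*r) + (v - u) * (r/2) := by
        rw [intervalIntegral.integral_add (f := fun x => f x ^ 2 / (2*r)) (g := fun _ => r/2)
          (((hfc.pow 2).div_const _).intervalIntegrable (μ := volume) u v)
          intervalIntegrable_const, intervalIntegral.integral_div]
        simp
        ring
      have hs := hsub u v h1 h2 h3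
      have hvu : v - u ≤ 3 := by linarith
      have hq : (∫ x in u..v, f x ^ 2) / (2*r) ≤ r / 2 := by
        rw [div_le_iff₀ (by positivity)]
        nlinarith
      calc (∫ x in u..v, |f x|) ≤ (∫ x in u..v, f x ^ 2) / (2*r) + (v - u) * (r/2) := by
            rw [← hval]; exact hmono
        _ ≤ r/2 + 3 * (r/2) := by nlinarith
        _ = 2 * r := by ring
    -- bound on integrals of f''
    have hint_f'' : ∀ u v : ℝ, t ≤ u → u ≤ v → v ≤ t + 3 →
        |∫ x in u..v, deriv (deriv f) x| ≤ 4 * r := by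
      intro u v h1 h2 h3
      calc |∫ x in u..v, deriv (deriv f) x| ≤ ∫ x in u..v, |deriv (deriv f) x| :=
            intervalIntegral.abs_integral_le_integral_abs h2
        _ ≤ ∫ x in u..v, 2 * |f x| := by
            apply intervalIntegral.integral_mono_on h2
              ((hf''c.abs).intervalIntegrable (μ := volume) u v)
              ((continuous_const.mul hfc.abs).intervalIntegrable (μ := volume) u v)
            intro x _; exact hf''b x
        _ = 2 * ∫ x in u..v, |f x| := by rw [intervalIntegral.integral_const_mul]
        _ ≤ 2 * (2 * r) := by
            have := habs u v h1 h2 h3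
            linarith
        _ = 4 * r := by ring
    have htξ : t ≤ ξ := by have := hξ.1; have := ha.1; linarith
    have hξt : ξ ≤ t + 3 := by have := hξ.2; have := hb.2; linarith
    -- |f'| ≤ 6r on [a, ξ]
    have hf's : ∀ s, a ≤ s → s ≤ ξ → |deriv f s| ≤ 6 * r := by
      intro s h1 h2
      have hfund : ∫ x in s..ξ, deriv (deriv f) x = deriv f ξ - deriv f s :=
        intervalIntegral.integral_eq_sub_of_hasDerivAt
          (fun x _ => (hfd1 x).hasDerivAt) (hf''c.intervalIntegrable _ _)
      have hbnd := hint_f'' s ξ (by linarith [ha.1]) h2 hξt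
      rw [hfund] at hbnd
      have : |deriv f s| ≤ |deriv f ξ| + |deriv f ξ - deriv f s| := by
        have := abs_sub_abs_le_abs_sub (deriv f s) (deriv f ξ)
        have := abs_sub_comm (deriv f ξ) (deriv f s)
        linarith [abs_sub_abs_le_abs_sub (deriv f s) (deriv f ξ),
          abs_sub_comm (deriv f s) (deriv f ξ)]
      linarith
    -- |f ξ| ≤ 19 r
    have hfξ : |f ξ| ≤ 19 * r := by
      have hfund : ∫ x in a..ξ, deriv f x = f ξ - f a :=
        intervalIntegral.integral_eq_sub_of_hasDerivAt
          (fun x _ => (hfd x).hasDerivAt) (hf'c.intervalIntegrable _ _)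
      have haξ : a ≤ ξ := hξ.1.le
      have hbig : ‖∫ x in a..ξ, deriv f x‖ ≤ 6 * r * |ξ - a| := by
        apply intervalIntegral.norm_integral_le_of_norm_le_const
        intro x hx
        rw [uIoc_of_le haξ] at hx
        rw [Real.norm_eq_abs]
        exact hf's x hx.1.le hx.2
      rw [Real.norm_eq_abs, hfund] at hbig
      have hd : |ξ - a| ≤ 3 := by
        rw [abs_of_nonneg (by linarith)]
        have := ha.1; linarith
      have : |f ξ| ≤ |f a| + |f ξ - f a| := by
        linarith [abs_sub_abs_le_abs_sub (f ξ) (f a)]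
      nlinarith
    -- conclude
    have hWξ : |W ξ| ≤ 60 * r := by
      have h1 : |W ξ| ≤ |f ξ| * |gker' ξ| + |deriv f ξ| * |gker ξ| := by
        rw [hWdef]
        calc |f ξ * gker' ξ - deriv f ξ * gker ξ|
            ≤ |f ξ * gker' ξ| + |deriv f ξ * gker ξ| := abs_sub _ _
          _ = |f ξ| * |gker' ξ| + |deriv f ξ| * |gker ξ| := by rw [abs_mul, abs_mul]
      have h2 : |f ξ| * |gker' ξ| ≤ 19 * r * 3 :=
        mul_le_mul hfξ (gker'_bound ξ) (abs_nonneg _) (by positivity)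
      have h3 : |deriv f ξ| * |gker ξ| ≤ 2 * r * 1 :=
        mul_le_mul hfξ' (gker_bound ξ) (abs_nonneg _) (by positivity)
      linarith
    rw [← hWconst ξ]
    exact hWξ
  have hW0 : W 0 = 0 := by
    by_contra h0
    have hpos : 0 < |W 0| := abs_pos.mpr h0
    have hε : (0:ℝ) < (|W 0| / 61) ^ 2 := by positivity
    have := key _ hε
    rw [Real.sqrt_sq (by positivity)] at this
    linarith
  -- initial conditions
  have hf0 : f 0 = 0 := by
    have h : W 0 = f 0 * gker' 0 - deriv f 0 * gker 0 := rfl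
    rw [gker_zero, gker'_zero, hW0] at h
    linarith
  have hf'0 : deriv f 0 = 0 := by
    have h2 : (fun x => f (-x)) = f := funext heven
    have h1 : deriv (fun x => f (-x)) 0 = - deriv f (-0) := deriv_comp_neg f 0
    rw [h2] at h1
    simp at h1
    linarith
  -- ODE uniqueness
  set v : ℝ → ℝ × ℝ → ℝ × ℝ :=
    fun s p => (p.2, (1 - 3 * (Real.cosh (s/2))⁻¹ ^ 2) * p.1) with hvdef
  have hlip : ∀ s, LipschitzWith 2 (v s) := by
    intro s
    apply LipschitzWith.of_dist_le_mul
    intro p q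
    rw [Prod.dist_eq, Prod.dist_eq]
    simp only [hvdef, Real.dist_eq]
    have hco : ((2:NNReal):ℝ) = 2 := by norm_num
    rw [hco]
    have hmax : (0:ℝ) ≤ max |p.1 - q.1| |p.2 - q.2| :=
      le_trans (abs_nonneg _) (le_max_left _ _)
    apply max_le
    · calc |p.2 - q.2| ≤ max |p.1 - q.1| |p.2 - q.2| := le_max_right _ _
        _ ≤ 2 * max |p.1 - q.1| |p.2 - q.2| := by linarith
    · have : (1 - 3 * (Real.cosh (s/2))⁻¹ ^ 2) * p.1
          - (1 - 3 * (Real.cosh (s/2))⁻¹ ^ 2) * q.1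
          = (1 - 3 * (Real.cosh (s/2))⁻¹ ^ 2) * (p.1 - q.1) := by ring
      rw [this, abs_mul]
      have h1 := coeff_bound s
      have h2 : |p.1 - q.1| ≤ max |p.1 - q.1| |p.2 - q.2| := le_max_left _ _
      have h3 := abs_nonneg (p.1 - q.1)
      nlinarith [abs_nonneg (1 - 3 * (Real.cosh (s/2))⁻¹ ^ 2)]
  set F : ℝ → ℝ × ℝ := fun s => (f s, deriv f s) with hFdef
  have hF' : ∀ s, HasDerivAt F (v s (F s)) s := by
    intro s
    have h := ((hfd s).hasDerivAt.prodMk ((hfd1 s).hasDerivAt))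
    convert h using 1
    simp only [hvdef, hFdef]
    rw [hf'' s]
  have hnonneg : ∀ x : ℝ, 0 ≤ x → f x = 0 := by
    intro x hx
    have := ODE_solution_unique_of_mem_Icc_right
      (v := v) (s := fun _ => (univ : Set (ℝ × ℝ))) (K := 2)
      (fun s _ => (hlip s).lipschitzOnWith)
      (f := F) (g := fun _ => ((0:ℝ), (0:ℝ))) (a := 0) (b := x)
      (hfc.prodMk hf'c).continuousOn
      (fun s _ => (hF' s).hasDerivWithinAt)
      (fun _ _ => trivial)
      continuousOn_const
      (fun s _ => by
        have : v s ((0:ℝ), (0:ℝ)) = ((0:ℝ), (0:ℝ)) := by simp [hvdef]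
        rw [← this] at *
        exact (hasDerivWithinAt_const _ _ _).congr_deriv (by simp [hvdef]; rfl))
      (fun _ _ => trivial)
      (by simp [hFdef, hf0, hf'0])
    have hmem : x ∈ Icc (0:ℝ) x := ⟨hx, le_rfl⟩
    have := this hmem
    simpa [hFdef] using congrArg Prod.fst this
  funext x
  simp only [Pi.zero_apply]
  rcases le_total 0 x with hx | hx
  · exact hnonneg x hx
  · rw [← neg_neg x, heven (-x)]
    exact hnonneg (-x) (by linarith)

end SchroedingerAux
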